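/- Let N = q^k·n^2 be an odd perfect number given in Eulerian form. Then I(q^k) < 2^(1/3) < I(n), where I(x) = σ(x)/x is the abundancy index. -/

import Mathlib

/-- The abundancy index `I(x) = σ(x)/x`, as a real number. -/
noncomputable def abundancy (x : ℕ) : ℝ := (ArithmeticFunction.sigma 1 x : ℝ) / x

open ArithmeticFunction Finset
open scoped ArithmeticFunction.sigma

lemma div_gcd_dvd_of_dvd_sq {m n : ℕ} (hn : n ≠ 0) (hm : m ∣ n ^ 2) : m / Nat.gcd m n ∣ n := by
  rcases eq_or_ne m 0 with rfl | hm0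
  · exact absurd (zero_dvd_iff.mp hm) (pow_ne_zero 2 hn)
  have hg : Nat.gcd m n ≠ 0 := Nat.gcd_ne_zero_left hm0
  have hd : Nat.gcd m n ∣ m := Nat.gcd_dvd_left m n
  have hq0 : m / Nat.gcd m n ≠ 0 := Nat.div_ne_zero_iff_of_dvd hd |>.mpr ⟨hm0, hg⟩
  rw [← Nat.factorization_le_iff_dvd hq0 hn, Nat.factorization_div hd,
    Nat.factorization_gcd hm0 hn]
  have hle : m.factorization ≤ (n ^ 2).factorization :=
    (Nat.factorization_le_iff_dvd hm0 (pow_ne_zero 2 hn)).mpr hm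
  rw [Nat.factorization_pow] at hle
  intro p
  have h1 := hle p
  simp only [Finsupp.tsub_apply, Finsupp.inf_apply, Finsupp.smul_apply, smul_eq_mul] at *
  omega

lemma sigma_sq_le (n : ℕ) (hn : n ≠ 0) : σ 1 (n ^ 2) ≤ σ 1 n * σ 1 n := by
  rw [sigma_one_apply, sigma_one_apply, Finset.sum_mul_sum, ← Finset.sum_product']
  set φ : ℕ → ℕ × ℕ := fun m => (Nat.gcd m n, m / Nat.gcd m n) with hφ
  have hval : ∀ m ∈ (n ^ 2).divisors, (φ m).1 * (φ m).2 = m := fun m hm =>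
    Nat.mul_div_cancel' (Nat.gcd_dvd_left m n)
  have hinj : Set.InjOn φ (n ^ 2).divisors := by
    intro a ha b hb h
    rw [← hval a ha, ← hval b hb, h]
  have hmap : ∀ m ∈ (n ^ 2).divisors, φ m ∈ n.divisors ×ˢ n.divisors := by
    intro m hm
    obtain ⟨hdvd, hne⟩ := Nat.mem_divisors.mp hm
    exact Finset.mem_product.mpr ⟨Nat.mem_divisors.mpr ⟨Nat.gcd_dvd_right m n, hn⟩,
      Nat.mem_divisors.mpr ⟨div_gcd_dvd_of_dvd_sq hn hdvd, hn⟩⟩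
  calc ∑ m ∈ (n ^ 2).divisors, m
      = ∑ p ∈ (n ^ 2).divisors.image φ, p.1 * p.2 := by
        rw [Finset.sum_image hinj]
        exact (Finset.sum_congr rfl hval).symm
    _ ≤ ∑ p ∈ n.divisors ×ˢ n.divisors, p.1 * p.2 := by
        apply Finset.sum_le_sum_of_subset_of_nonneg
        · intro p hp
          obtain ⟨m, hm, rfl⟩ := Finset.mem_image.mp hp
          exact hmap m hm
        · intros; positivity

/-- For an odd perfect number `N = q^k * n^2` in Eulerian form,
`I(q^k) < 2^(1/3) < I(n)`. -/
theorem stmt_11 (q k n : ℕ) (hq : q.Prime) (hq1 : q % 4 = 1) (hk1 : k % 4 = 1)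
    (hgcd : Nat.gcd q n = 1) (hodd : Odd (q ^ k * n ^ 2))
    (hperf : Nat.Perfect (q ^ k * n ^ 2)) :
    abundancy (q ^ k) < (2 : ℝ) ^ ((1 : ℝ) / 3) ∧
    (2 : ℝ) ^ ((1 : ℝ) / 3) < abundancy n := by
  have hq5 : 5 ≤ q := by have := hq.two_le; omega
  have hN0 : 0 < q ^ k * n ^ 2 := hperf.2
  have hn0 : n ≠ 0 := by rintro rfl; simp at hN0
  have hq5R : (5:ℝ) ≤ (q:ℝ) := by exact_mod_cast hq5
  have hqR1 : ((q:ℝ)) ≠ 1 := by nlinarith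
  have hxpos : (0:ℝ) < (q:ℝ) ^ k := by positivity
  have hx1 : (1:ℝ) ≤ (q:ℝ) ^ k := one_le_pow₀ (by linarith)
  have hy2 : (0:ℝ) < (n:ℝ) ^ 2 := by
    have : (0:ℝ) < (n:ℝ) := by exact_mod_cast Nat.pos_of_ne_zero hn0
    positivity
  set c : ℝ := (2:ℝ) ^ ((1:ℝ)/3) with hc
  have hc0 : 0 < c := Real.rpow_pos_of_pos (by norm_num) _
  have hc3 : c ^ 3 = 2 := by
    rw [hc, ← Real.rpow_natCast ((2:ℝ) ^ ((1:ℝ)/3)) 3,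
      ← Real.rpow_mul (by norm_num : (0:ℝ) ≤ 2)]
    norm_num
  -- sigma identity from perfection and multiplicativity
  have hσ : (σ 1 (q ^ k)) * σ 1 (n ^ 2) = 2 * (q ^ k * n ^ 2) := by
    rw [← isMultiplicative_sigma.map_mul_of_coprime (Nat.Coprime.pow k 2 hgcd), sigma_one_apply]
    exact (Nat.perfect_iff_sum_divisors_eq_two_mul hN0).mp hperf
  -- value of sigma at the prime power
  have hA : ((σ 1 (q ^ k) : ℕ) : ℝ) = ((q:ℝ) ^ (k + 1) - 1) / ((q:ℝ) - 1) := by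
    rw [sigma_one_apply_prime_pow hq]
    push_cast
    rw [geom_sum_eq hqR1]
  have hApos : (0:ℝ) < ((σ 1 (q ^ k) : ℕ) : ℝ) := by
    rw [hA]
    apply div_pos _ (by linarith)
    have hpow : (q:ℝ) ^ (k + 1) = (q:ℝ) ^ k * (q:ℝ) := pow_succ _ _
    nlinarith
  have hAx : 4 * ((σ 1 (q ^ k) : ℕ) : ℝ) < 5 * (q:ℝ) ^ k := by
    rw [hA, ← mul_div_assoc, div_lt_iff₀ (by linarith : (0:ℝ) < (q:ℝ) - 1)]
    have hpow : (q:ℝ) ^ (k + 1) = (q:ℝ) ^ k * (q:ℝ) := pow_succ _ _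
    nlinarith
  have h54c : (5:ℝ)/4 < c := by
    apply lt_of_pow_lt_pow_left₀ 3 hc0.le
    rw [hc3]; norm_num
  have habq : abundancy (q ^ k) < 5/4 := by
    unfold abundancy
    have hcast : ((q ^ k : ℕ) : ℝ) = (q:ℝ) ^ k := by push_cast; ring
    rw [hcast, div_lt_iff₀ hxpos]
    linarith
  refine ⟨habq.trans h54c, ?_⟩
  -- second inequality
  have hσR : ((σ 1 (q ^ k) : ℕ) : ℝ) * ((σ 1 (n ^ 2) : ℕ) : ℝ)
      = 2 * (q:ℝ) ^ k * (n:ℝ) ^ 2 := by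
    have := congrArg (fun t : ℕ => (t : ℝ)) hσ
    push_cast at this
    linarith [this]
  have hBy : (8:ℝ)/5 < ((σ 1 (n ^ 2) : ℕ) : ℝ) / (n:ℝ) ^ 2 := by
    rw [lt_div_iff₀ hy2]
    nlinarith [mul_lt_mul_of_pos_right hAx hy2, hApos, hσR, mul_pos hApos hy2]
  have hC2 : ((σ 1 (n ^ 2) : ℕ) : ℝ) ≤ ((σ 1 n : ℕ) : ℝ) ^ 2 := by
    have := sigma_sq_le n hn0
    have h' : ((σ 1 (n ^ 2) : ℕ) : ℝ) ≤ ((σ 1 n : ℕ) : ℝ) * ((σ 1 n : ℕ) : ℝ) := by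
      exact_mod_cast this
    nlinarith [h']
  have hc2 : c ^ 2 < 8/5 := by
    apply lt_of_pow_lt_pow_left₀ 3 (by norm_num)
    have h6 : (c ^ 2) ^ 3 = (c ^ 3) ^ 2 := by ring
    rw [h6, hc3]; norm_num
  have hfin : c ^ 2 < (((σ 1 n : ℕ) : ℝ) / (n:ℝ)) ^ 2 := by
    rw [div_pow]
    calc c ^ 2 < 8/5 := hc2
      _ < ((σ 1 (n ^ 2) : ℕ) : ℝ) / (n:ℝ) ^ 2 := hBy
      _ ≤ ((σ 1 n : ℕ) : ℝ) ^ 2 / (n:ℝ) ^ 2 := (div_le_div_iff_of_pos_right hy2).mpr hC2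
  have hnn : (0:ℝ) ≤ ((σ 1 n : ℕ) : ℝ) / (n:ℝ) := by positivity
  exact lt_of_pow_lt_pow_left₀ 2 hnn hfin
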